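/- Every regular homomorphic image of a Prüfer ring is a Prüfer ring: if f : A → B is a surjective ring homomorphism such that f⁻¹(Reg(B)) ⊆ Reg(A), and A is a Prüfer ring, then B is a Prüfer ring. -/

import Mathlib

/-- A Prüfer ring: every finitely generated regular ideal is invertible
(as a submodule of the total ring of fractions). -/
def IsPruferRing (R : Type*) [CommRing R] : Prop :=
  ∀ I : Ideal R, I.FG → (∃ r ∈ I, r ∈ nonZeroDivisors R) →
    ∃ J : Submodule R (FractionRing R),
      Submodule.map (Algebra.linearMap R (FractionRing R)) I * J = 1

lemma linearMap_eq_ofId (R : Type*) [CommRing R] :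
    Algebra.linearMap R (FractionRing R) = (Algebra.ofId R (FractionRing R)).toLinearMap := rfl

/-- From invertibility in the fraction ring, extract an ideal-level factorization. -/
lemma inv_to_ideal {R : Type*} [CommRing R] {I : Ideal R} {a : R}
    (ha : a ∈ I) (J : Submodule R (FractionRing R))
    (hJ : Submodule.map (Algebra.linearMap R (FractionRing R)) I * J = 1) :
    ∃ K : Ideal R, I * K = Ideal.span {a} := by
  set ι := Algebra.linearMap R (FractionRing R) with hι
  have hinj : Function.Injective ι := IsFractionRing.injective R (FractionRing R)
  set M : Submodule R (FractionRing R) := Submodule.span R {ι a} * J with hMdef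
  have hspan_le : Submodule.span R {ι a} ≤ Submodule.map ι I := by
    rw [Submodule.span_le, Set.singleton_subset_iff]
    exact ⟨a, ha, rfl⟩
  have hM1 : M ≤ 1 := by
    rw [← hJ]
    exact mul_le_mul' hspan_le le_rfl
  have hMrange : M ≤ LinearMap.range ι := by
    rw [← Submodule.one_eq_range]; exact hM1
  refine ⟨Submodule.comap ι M, ?_⟩
  have hmapK : Submodule.map ι (Submodule.comap ι M) = M := by
    rw [Submodule.map_comap_eq, inf_eq_right.mpr hMrange]
  apply Submodule.map_injective_of_injective hinj (f := ι)
  have hmul : ∀ P Q : Ideal R, Submodule.map ι (P * Q) = Submodule.map ι P * Submodule.map ι Q := by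
    intro P Q
    rw [hι, linearMap_eq_ofId]
    exact Submodule.map_mul P Q (Algebra.ofId R (FractionRing R))
  rw [hmul, hmapK, hMdef, ← mul_assoc, mul_comm (Submodule.map ι I), mul_assoc, hJ,
    mul_one, Ideal.span, Submodule.map_span, Set.image_singleton]

theorem stmt15 {A B : Type*} [CommRing A] [CommRing B] (f : A →+* B)
    (hsurj : Function.Surjective f)
    (hreg : ∀ a : A, f a ∈ nonZeroDivisors B → a ∈ nonZeroDivisors A)
    (hA : IsPruferRing A) :
    IsPruferRing B := by
  intro I hFG hRegI
  obtain ⟨r, hrI, hrreg⟩ := hRegI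
  obtain ⟨s, hs⟩ := hFG
  set g : B → A := Function.surjInv hsurj with hgdef
  have hg : ∀ b, f (g b) = b := Function.surjInv_eq hsurj
  set I' : Ideal A := Ideal.span (insert (g r) (g '' ↑s)) with hI'
  have hfgI' : I'.FG := by
    apply Submodule.fg_span
    exact Set.Finite.insert _ (s.finite_toSet.image g)
  have hmem : g r ∈ I' := Ideal.subset_span (Set.mem_insert _ _)
  have hregA : g r ∈ nonZeroDivisors A := hreg _ (by rw [hg]; exact hrreg)
  obtain ⟨J', hJ'⟩ := hA I' hfgI' ⟨g r, hmem, hregA⟩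
  obtain ⟨K, hK⟩ := inv_to_ideal hmem J' hJ'
  have hmapI' : Ideal.map f I' = I := by
    rw [hI', Ideal.map_span, Set.image_insert_eq, hg, Set.image_image]
    simp only [hg]
    rw [Set.image_id', Ideal.span_insert, ← hs]
    exact sup_eq_right.mpr (by simpa [Ideal.span_le, hs] using hrI)
  have hKB : I * Ideal.map f K = Ideal.span {r} := by
    rw [← hmapI', ← Ideal.map_mul, hK, Ideal.map_span, Set.image_singleton, hg]
  -- now invert in FractionRing B
  set ιB := Algebra.linearMap B (FractionRing B) with hιB
  obtain ⟨u, hu⟩ := IsLocalization.map_units (FractionRing B) (⟨r, hrreg⟩ : nonZeroDivisors B)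
  refine ⟨Submodule.span B {((u⁻¹ : (FractionRing B)ˣ) : FractionRing B)} *
    Submodule.map ιB (Ideal.map f K), ?_⟩
  have hmul : ∀ P Q : Ideal B,
      Submodule.map ιB (P * Q) = Submodule.map ιB P * Submodule.map ιB Q := by
    intro P Q
    rw [hιB, linearMap_eq_ofId]
    exact Submodule.map_mul P Q (Algebra.ofId B (FractionRing B))
  rw [← mul_assoc, mul_comm (Submodule.map ιB I), mul_assoc, ← hmul, hKB,
    Ideal.span, Submodule.map_span, Set.image_singleton]
  have : (ιB r : FractionRing B) = (u : FractionRing B) := hu.symm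
  rw [show (ιB r : FractionRing B) = (u : FractionRing B) from hu.symm,
    Submodule.span_mul_span]
  simp [Submodule.one_eq_span]
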